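/- Let f be a bLSP morphism of A* and let a, b, c be pairwise distinct letters of A. Then f is LSP (a, b, c)-breaking if and only if the longest common prefix of f(b) and f(c) is strictly longer than the longest common prefix of f(a) and f(b). -/

import Mathlib

/-- `u` is a prefix of the infinite word `w`. -/
def PrefI {A : Type*} (u : List A) (w : ℕ → A) : Prop :=
  ∀ i (h : i < u.length), u[i] = w i

/-- `u` is a factor of the infinite word `w`. -/
def FactorI {A : Type*} (w : ℕ → A) (u : List A) : Prop :=
  ∃ k, ∀ i (h : i < u.length), u[i] = w (k + i)

/-- The infinite word `w` is LSP: every left special factor of `w` is a prefix of `w`. -/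
def LSPInf {A : Type*} (w : ℕ → A) : Prop :=
  ∀ (u : List A) (a b : A), a ≠ b → FactorI w (a :: u) → FactorI w (b :: u) → PrefI u w

/-- `f` is a bLSP morphism (given by its action on letters). -/
def IsBLSP {A : Type*} (f : A → List A) : Prop :=
  ∃ α, f α = [α] ∧ ∀ β, β ≠ α → ∃ γ, f β = f γ ++ [β]

/-- `v` is the image of the infinite word `w` under the non-erasing morphism `f`,
i.e. every finite concatenation `f (w 0) ++ ⋯ ++ f (w (n-1))` is a prefix of `v`. -/
def IsImage {A B : Type*} (f : A → List B) (w : ℕ → A) (v : ℕ → B) : Prop :=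
  ∀ n, PrefI (((List.range n).map w).flatMap f) v

/-- `u` is an `(a, b, c, β, γ)`-fragility of `w`: `ua` is a prefix of `w` while
`βub` and `γuc` are factors of `w`. -/
def FragilityAt {A : Type*} (w : ℕ → A) (u : List A) (a b c β γ : A) : Prop :=
  PrefI (u ++ [a]) w ∧ FactorI w (β :: (u ++ [b])) ∧ FactorI w (γ :: (u ++ [c]))

/-- `w` is `(a, b, c)`-fragile. -/
def Fragile {A : Type*} (w : ℕ → A) (a b c : A) : Prop :=
  ∃ β γ, β ≠ γ ∧ ∃ u, FragilityAt w u a b c β γ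

/-- `f` is LSP `(a, b, c)`-breaking: the image of every `(a, b, c)`-fragile
infinite LSP word under `f` is not LSP. -/
def Breaking {A : Type*} (f : A → List A) (a b c : A) : Prop :=
  ∀ w : ℕ → A, LSPInf w → Fragile w a b c → ∀ v, IsImage f w v → ¬ LSPInf v

/-- The longest common prefix of two words. -/
def lcp {A : Type*} [DecidableEq A] : List A → List A → List A
  | [], _ => []
  | _ :: _, [] => []
  | a :: u, b :: v => if a = b then a :: lcp u v else []

section LCP
variable {A : Type*} [DecidableEq A]

theorem lcp_prefix_left : ∀ s t : List A, lcp s t <+: s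
  | [], _ => by simp [lcp]
  | _ :: _, [] => by simp [lcp]
  | a :: u, b :: v => by
      rw [lcp]
      split
      · exact List.cons_prefix_cons.mpr ⟨rfl, lcp_prefix_left u v⟩
      · simp

theorem lcp_prefix_right : ∀ s t : List A, lcp s t <+: t
  | [], _ => by simp [lcp]
  | _ :: _, [] => by simp [lcp]
  | a :: u, b :: v => by
      rw [lcp]
      split
      · rename_i h; subst h; exact List.cons_prefix_cons.mpr ⟨rfl, lcp_prefix_right u v⟩
      · simp

theorem prefix_lcp : ∀ {r s t : List A}, r <+: s → r <+: t → r <+: lcp s t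
  | [], _, _, _, _ => by simp
  | x :: r, s, t, hs, ht => by
      obtain ⟨s', rfl⟩ := hs
      obtain ⟨t', rfl⟩ := ht
      rw [List.cons_append, List.cons_append, lcp, if_pos rfl]
      exact List.cons_prefix_cons.mpr ⟨rfl, prefix_lcp ⟨s', rfl⟩ ⟨t', rfl⟩⟩

theorem lcp_get_ne : ∀ (s t : List A) (hs : (lcp s t).length < s.length)
    (ht : (lcp s t).length < t.length), s[(lcp s t).length] ≠ t[(lcp s t).length]
  | [], _, hs, _ => by simp [lcp] at hs
  | _ :: _, [], _, ht => by simp [lcp] at ht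
  | a :: u, b :: v, hs, ht => by
      by_cases h : a = b
      · have e : lcp (a :: u) (b :: v) = a :: lcp u v := by rw [lcp, if_pos h]
        simp only [e] at hs ht ⊢
        simpa using lcp_get_ne u v (by simpa using hs) (by simpa using ht)
      · have e : lcp (a :: u) (b :: v) = [] := by rw [lcp, if_neg h]
        simp only [e]
        simpa using h

end LCP

section BLSP
variable {A : Type*} (f : A → List A) (α : A)
  (hα : f α = [α]) (hstep : ∀ β, β ≠ α → ∃ γ, f β = f γ ++ [β])

include hα hstep in
theorem blsp_head_tail : ∀ β, ∃ t, f β = α :: t ∧ α ∉ t := by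
  have key : ∀ n β, (f β).length = n → ∃ t, f β = α :: t ∧ α ∉ t := by
    intro n
    induction n using Nat.strong_induction_on with
    | _ n ih =>
      intro β hlen
      by_cases hβ : β = α
      · subst hβ; exact ⟨[], by simp [hα], by simp⟩
      · obtain ⟨γ, hγ⟩ := hstep β hβ
        have hlt : (f γ).length < n := by rw [← hlen, hγ]; simp
        obtain ⟨t, ht, hαt⟩ := ih _ hlt γ rfl
        refine ⟨t ++ [β], by rw [hγ, ht]; simp, ?_⟩
        simp only [List.mem_append, List.mem_singleton]
        rintro (h | rfl)
        · exact hαt h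
        · exact hβ rfl
  exact fun β => key _ β rfl

include hα hstep in
theorem blsp_snoc : ∀ β, ∃ s, f β = s ++ [β] := by
  intro β
  by_cases hβ : β = α
  · subst hβ; exact ⟨[], by simp [hα]⟩
  · obtain ⟨γ, hγ⟩ := hstep β hβ; exact ⟨f γ, hγ⟩

include hα hstep in
theorem blsp_len_pos : ∀ β, 0 < (f β).length := by
  intro β
  obtain ⟨t, ht, -⟩ := blsp_head_tail f α hα hstep β
  simp [ht]

include hα hstep in
theorem blsp_getD_zero : ∀ β, (f β).getD 0 α = α := by
  intro β
  obtain ⟨t, ht, -⟩ := blsp_head_tail f α hα hstep β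
  simp [ht]

include hα hstep in
theorem blsp_getD_ne : ∀ β i, 0 < i → i < (f β).length → (f β).getD i α ≠ α := by
  intro β i hi hilen
  obtain ⟨t, ht, hαt⟩ := blsp_head_tail f α hα hstep β
  rw [ht] at hilen ⊢
  rw [List.getD_eq_getElem _ _ hilen]
  intro h
  apply hαt
  rw [← h]
  obtain ⟨j, rfl⟩ := Nat.exists_eq_add_of_lt hi
  simp only [List.getElem_cons_succ]
  exact List.getElem_mem _
  
include hα hstep in
theorem blsp_getD_last : ∀ β, (f β).getD ((f β).length - 1) α = β := by
  intro β
  obtain ⟨s, hs⟩ := blsp_snoc f α hα hstep β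
  rw [hs]
  simp

include hα hstep in
theorem blsp_take : ∀ n β ℓ, (f β).length = n → 0 < ℓ → ℓ ≤ n →
    (f β).take ℓ = f ((f β).getD (ℓ - 1) α) := by
  intro n
  induction n using Nat.strong_induction_on with
  | _ n ih =>
    intro β ℓ hlen hl hln
    by_cases hβ : β = α
    · subst hβ
      have : ℓ = 1 := by simp [hα] at hlen; omega
      subst this; simp [hα]
    · obtain ⟨γ, hγ⟩ := hstep β hβ
      by_cases he : ℓ = n
      · subst he
        rw [← hlen, List.take_length]
        have := blsp_getD_last f α hα hstep β
        rw [this]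
      · have hlt : ℓ < n := lt_of_le_of_ne hln he
        have hγlen : (f γ).length = n - 1 := by
          have : n = (f γ).length + 1 := by rw [← hlen, hγ]; simp
          omega
        have hℓγ : ℓ ≤ (f γ).length := by omega
        have h1 : (f β).take ℓ = (f γ).take ℓ := by
          rw [hγ, List.take_append_of_le_length hℓγ]
        have h2 : (f β).getD (ℓ - 1) α = (f γ).getD (ℓ - 1) α := by
          rw [hγ, List.getD_append]
          omega
        rw [h1, h2]
        exact ih (n-1) (by omega) γ ℓ hγlen hl (by omega)

end BLSP

section VW
variable {A : Type*}

/-- Concatenation of the blocks `B 0, B 1, …`, read at position `n`, starting from block `k`. -/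
def vAux (B : ℕ → List A) (d : A) (k n : ℕ) : A :=
  if h : n < (B k).length then (B k)[n]
  else if h2 : (B k).length = 0 then d
  else vAux B d (k+1) (n - (B k).length)
termination_by n
decreasing_by omega

/-- Sum of lengths of blocks `j, j+1, …, j+k-1`. -/
def cumFrom (B : ℕ → List A) : ℕ → ℕ → ℕ
  | _, 0 => 0
  | j, k+1 => (B j).length + cumFrom B (j+1) k

theorem cumFrom_succ_right (B : ℕ → List A) :
    ∀ j k, cumFrom B j (k+1) = cumFrom B j k + (B (j+k)).length := by
  intro j k
  induction k generalizing j with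
  | zero => simp [cumFrom]
  | succ k ih =>
    have e : j + 1 + k = j + (k + 1) := by omega
    calc cumFrom B j (k+1+1) = (B j).length + cumFrom B (j+1) (k+1) := rfl
      _ = (B j).length + (cumFrom B (j+1) k + (B (j+1+k)).length) := by rw [ih]
      _ = (B j).length + cumFrom B (j+1) k + (B (j+(k+1))).length := by
          rw [e, Nat.add_assoc]
      _ = cumFrom B j (k+1) + (B (j+(k+1))).length := rfl

theorem vAux_shift (B : ℕ → List A) (d : A) (hB : ∀ k, (B k).length ≠ 0) :
    ∀ k j n, vAux B d j (cumFrom B j k + n) = vAux B d (j + k) n := by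
  intro k
  induction k with
  | zero => simp [cumFrom]
  | succ k ih =>
    intro j n
    rw [cumFrom]
    rw [vAux]
    have h1 : ¬ ((B j).length + cumFrom B (j+1) k + n < (B j).length) := by omega
    rw [dif_neg h1, dif_neg (hB j)]
    have h2 : (B j).length + cumFrom B (j+1) k + n - (B j).length
        = cumFrom B (j+1) k + n := by omega
    rw [h2, ih (j+1) n]
    congr 1
    omega

theorem vAux_get (B : ℕ → List A) (d : A) (k n : ℕ) (h : n < (B k).length) :
    vAux B d k n = (B k)[n] := by
  rw [vAux, dif_pos h]

theorem vW_access (B : ℕ → List A) (d : A) (hB : ∀ k, (B k).length ≠ 0)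
    (k n : ℕ) (h : n < (B k).length) :
    vAux B d 0 (cumFrom B 0 k + n) = (B k)[n] := by
  rw [vAux_shift B d hB k 0 n, Nat.zero_add, vAux_get B d k n h]

theorem vW_decomp (B : ℕ → List A) (hB : ∀ k, (B k).length ≠ 0) :
    ∀ n, ∃ k o, o < (B k).length ∧ n = cumFrom B 0 k + o := by
  intro n
  induction n with
  | zero => exact ⟨0, 0, by have := hB 0; omega, by simp [cumFrom]⟩
  | succ n ih =>
    obtain ⟨k, o, ho, rfl⟩ := ih
    by_cases h : o + 1 < (B k).length
    · exact ⟨k, o + 1, h, by omega⟩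
    · refine ⟨k + 1, 0, by have := hB (k+1); omega, ?_⟩
      rw [cumFrom_succ_right]
      simp only [Nat.zero_add]
      omega

/-- `α` appears exactly at the block starts. -/
theorem vW_alpha_iff {A : Type*} (B : ℕ → List A) (d : A) (hB : ∀ k, (B k).length ≠ 0)
    (hhead : ∀ k, (B k)[0]'(by have := hB k; omega) = d)
    (htail : ∀ k i (h : i < (B k).length), 0 < i → (B k)[i] ≠ d) (n : ℕ) :
    vAux B d 0 n = d ↔ ∃ k, n = cumFrom B 0 k := by
  constructor
  · intro h
    obtain ⟨k, o, ho, rfl⟩ := vW_decomp B hB n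
    rw [vW_access B d hB k o ho] at h
    rcases Nat.eq_zero_or_pos o with rfl | hpos
    · exact ⟨k, by omega⟩
    · exact absurd h (htail k o ho hpos)
  · rintro ⟨k, rfl⟩
    have h0 : (0:ℕ) < (B k).length := by have := hB k; omega
    have := vW_access B d hB k 0 h0
    rw [Nat.add_zero] at this
    rw [this, hhead k]

end VW

section PRED
variable {A : Type*} [DecidableEq A] (f : A → List A) (α : A)

/-- The forced predecessor letter of an `α`-free factor, determined by the factor itself. -/
def predD (f : A → List A) (α : A) (s : List A) : A :=
  (f (s.getD (s.length - 1) α)).getD ((f (s.getD (s.length - 1) α)).length - s.length - 1) α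

variable (hα : f α = [α]) (hstep : ∀ β, β ≠ α → ∃ γ, f β = f γ ++ [β])

include hα hstep in
theorem hB_ne (w : ℕ → A) : ∀ k, (f (w k)).length ≠ 0 := by
  intro k
  have := blsp_len_pos f α hα hstep (w k)
  omega

include hα hstep in
/-- An `α`-free factor occurrence lies strictly inside a single block. -/
theorem alpha_free_in_block (w : ℕ → A) (s : List A) (hs : s ≠ []) (hαs : α ∉ s)
    (j : ℕ) (hocc : ∀ i (h : i < s.length), s[i] = vAux (fun k => f (w k)) α 0 (j + i)) :
    ∃ k o, j = cumFrom (fun k => f (w k)) 0 k + o ∧ 0 < o ∧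
      o + s.length ≤ (f (w k)).length := by
  set B : ℕ → List A := fun k => f (w k) with hBdef
  have hB : ∀ k, (B k).length ≠ 0 := hB_ne f α hα hstep w
  have hhead : ∀ k (h : 0 < (B k).length), (B k)[0] = α := by
    intro k h
    obtain ⟨t, ht, -⟩ := blsp_head_tail f α hα hstep (w k)
    simp [hBdef, ht]
  obtain ⟨k, o, ho, hj⟩ := vW_decomp B hB j
  have hslen : 0 < s.length := List.length_pos_iff.mpr hs
  have h0 : s[0]'hslen = vAux B α 0 j := by
    have := hocc 0 hslen; simpa using this
  have hopos : 0 < o := by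
    rcases Nat.eq_zero_or_pos o with rfl | h
    · exfalso
      apply hαs
      rw [Nat.add_zero] at hj
      subst hj
      have := vW_access B α hB k 0 (by have := hB k; omega)
      rw [Nat.add_zero] at this
      rw [this, hhead k] at h0
      rw [← h0]
      exact List.getElem_mem _
    · exact h
  refine ⟨k, o, hj, hopos, ?_⟩
  by_contra hcon
  push_neg at hcon
  have hcon2 : (B k).length < o + s.length := hcon
  set i := (B k).length - o with hi
  have hilt : i < s.length := by omega
  have hji : j + i = cumFrom B 0 (k+1) := by
    rw [cumFrom_succ_right]
    simp only [Nat.zero_add]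
    omega
  have hv : vAux B α 0 (j + i) = α := by
    rw [hji]
    have := vW_access B α hB (k+1) 0 (by have := hB (k+1); omega)
    rw [Nat.add_zero] at this
    rw [this, hhead (k+1)]
  apply hαs
  have := hocc i hilt
  rw [hv] at this
  rw [← this]
  exact List.getElem_mem _

include hα hstep in
/-- The predecessor of an occurrence of a factor not starting with `α` is determined. -/
theorem pred_determined (w : ℕ → A) (u : List A) (hu : u ≠ [])
    (h0 : u[0]'(List.length_pos_iff.mpr hu) ≠ α)
    (j : ℕ) (hocc : ∀ i (h : i < u.length), u[i] = vAux (fun k => f (w k)) α 0 (j + 1 + i)) :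
    vAux (fun k => f (w k)) α 0 j = predD f α (u.takeWhile (fun x => decide (x ≠ α))) := by
  set B : ℕ → List A := fun k => f (w k) with hBdef
  have hB : ∀ k, (B k).length ≠ 0 := hB_ne f α hα hstep w
  set s : List A := u.takeWhile (fun x => decide (x ≠ α)) with hsdef
  have hsu : s <+: u := List.takeWhile_prefix _
  have hslenle : s.length ≤ u.length := hsu.length_le
  have hsget : ∀ i (h : i < s.length), s[i] = u[i]'(by omega) := by
    intro i h
    exact hsu.getElem h
  have hαs : α ∉ s := by
    intro hmem
    have := List.mem_takeWhile_imp hmem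
    simp at this
  have hs : s ≠ [] := by
    intro he
    rw [hsdef] at he
    rcases u with _ | ⟨x, u'⟩
    · exact hu rfl
    · simp only [List.getElem_cons_zero] at h0
      rw [List.takeWhile_cons, if_pos (by simpa using h0)] at he
      simp at he
  have hslen : 0 < s.length := List.length_pos_iff.mpr hs
  have hsocc : ∀ i (h : i < s.length), s[i] = vAux B α 0 ((j+1) + i) := by
    intro i h
    rw [hsget i h]
    exact hocc i (by omega)
  obtain ⟨k, o, hj, hopos, holen⟩ :=
    alpha_free_in_block f α hα hstep w s hs hαs (j+1) hsocc
  have hj2 : j + 1 = cumFrom B 0 k + o := hj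
  have holen2 : o + s.length ≤ (B k).length := holen
  set ℓ : ℕ := o + s.length with hℓ
  have hℓpos : 0 < ℓ := by omega
  have hℓle : ℓ ≤ (B k).length := holen
  have htake : (B k).take ℓ = f ((B k).getD (ℓ - 1) α) :=
    blsp_take f α hα hstep _ (w k) ℓ rfl hℓpos hℓle
  set d : A := (B k).getD (ℓ - 1) α with hd
  have hlend : (f d).length = ℓ := by
    rw [← htake, List.length_take]
    omega
  -- d is the last letter of s
  have hdlast : d = s.getD (s.length - 1) α := by
    have h1 : (B k).getD (ℓ - 1) α = (B k)[ℓ-1]'(by omega) := List.getD_eq_getElem _ _ (by omega)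
    have h2 : vAux B α 0 (cumFrom B 0 k + (ℓ-1)) = (B k)[ℓ-1]'(by omega) :=
      vW_access B α hB k (ℓ-1) (by omega)
    have h3 : cumFrom B 0 k + (ℓ-1) = (j+1) + (s.length - 1) := by omega
    have h4 := hsocc (s.length - 1) (by omega)
    rw [hd, h1, ← h2, h3, ← h4]
    exact (List.getD_eq_getElem _ _ (by omega)).symm
  -- the predecessor is (f d)[o - 1]
  have hx : vAux B α 0 j = (B k)[o-1]'(by omega) := by
    have h2 : vAux B α 0 (cumFrom B 0 k + (o-1)) = (B k)[o-1]'(by omega) :=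
      vW_access B α hB k (o-1) (by omega)
    rw [← h2]
    congr 1
    omega
  have hx2 : (B k)[o-1]'(by omega) = (f d)[o-1]'(by omega) := by
    simp only [← htake, List.getElem_take]
  rw [hx, hx2, predD, ← hdlast]
  rw [List.getD_eq_getElem _ _ (by omega)]
  congr 1
  omega

end PRED

section ABC
variable {A : Type*} [DecidableEq A]

/-- The periodic word `abcabc⋯`. -/
def wabc (a b c : A) : ℕ → A := fun n => if n % 3 = 0 then a else if n % 3 = 1 then b else c

theorem wabc_congr (a b c : A) {m n : ℕ} (h : m % 3 = n % 3) :
    wabc a b c m = wabc a b c n := by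
  unfold wabc
  rw [h]

@[simp] theorem wabc_zero (a b c : A) : wabc a b c 0 = a := by simp [wabc]
@[simp] theorem wabc_one (a b c : A) : wabc a b c 1 = b := by simp [wabc]
@[simp] theorem wabc_two (a b c : A) : wabc a b c 2 = c := by simp [wabc]

theorem vAux_congr {B : ℕ → List A} {d : A} :
    ∀ i K K', (∀ j, B (K + j) = B (K' + j)) → vAux B d K i = vAux B d K' i := by
  intro i
  induction i using Nat.strong_induction_on with
  | _ i ih =>
    intro K K' h
    have h0 : B K = B K' := by simpa using h 0
    conv_lhs => rw [vAux]
    conv_rhs => rw [vAux]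
    simp only [← h0]
    by_cases hlt : i < (B K).length
    · simp only [dif_pos hlt]
    · simp only [dif_neg hlt]
      by_cases hz : (B K).length = 0
      · simp only [dif_pos hz]
      · simp only [dif_neg hz]
        refine ih _ (by omega) (K+1) (K'+1) fun j => ?_
        have := h (1 + j)
        rw [show K + (1+j) = K + 1 + j by omega, show K' + (1+j) = K' + 1 + j by omega] at this
        exact this

end ABC

section MAIN
set_option linter.unusedSectionVars false
variable {A : Type*} [DecidableEq A] (f : A → List A) (α : A)
  (hα : f α = [α]) (hstep : ∀ β, β ≠ α → ∃ γ, f β = f γ ++ [β])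
  (a b c : A)

include hα hstep in
/-- An occurrence of a factor starting with `α` is at a block start; its predecessor
and its content are determined by the block index mod 3. -/
theorem occ_start (u : List A) (hu : u ≠ [])
    (h0 : u[0]'(List.length_pos_iff.mpr hu) = α) (k : ℕ)
    (hocc : ∀ i (h : i < u.length),
      u[i] = vAux (fun m => f (wabc a b c m)) α 0 (k + 1 + i)) :
    ∃ r < 3, vAux (fun m => f (wabc a b c m)) α 0 k = wabc a b c (r + 2) ∧
      ∀ i (h : i < u.length),
        u[i] = vAux (fun m => f (wabc a b c m)) α 0
          (cumFrom (fun m => f (wabc a b c m)) 0 r + i) := by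
  set w : ℕ → A := wabc a b c with hwdef
  set B : ℕ → List A := fun m => f (w m) with hBdef
  have hB : ∀ m, (B m).length ≠ 0 := hB_ne f α hα hstep w
  have hhead : ∀ m, (B m)[0]'(by have := hB m; omega) = α := by
    intro m
    obtain ⟨t, ht, -⟩ := blsp_head_tail f α hα hstep (w m)
    simp [hBdef, ht]
  have htail : ∀ m i (h : i < (B m).length), 0 < i → (B m)[i] ≠ α := by
    intro m i h hi
    have := blsp_getD_ne f α hα hstep (w m) i hi h
    rwa [List.getD_eq_getElem _ _ h] at this
  -- the position k+1 carries α, hence is a block start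
  have hα1 : vAux B α 0 (k + 1) = α := by
    have := hocc 0 (List.length_pos_iff.mpr hu)
    rw [h0] at this
    simpa using this.symm
  obtain ⟨K, hK⟩ := (vW_alpha_iff B α hB hhead htail (k+1)).mp hα1
  have hKpos : 0 < K := by
    rcases Nat.eq_zero_or_pos K with rfl | h
    · simp [cumFrom] at hK
    · exact h
  -- the predecessor is the last letter of block K-1
  have hcum : cumFrom B 0 K = cumFrom B 0 (K-1) + (B (K-1)).length := by
    have := cumFrom_succ_right B 0 (K-1)
    rw [show K - 1 + 1 = K by omega] at this
    simpa using this
  have hpred : vAux B α 0 k = w (K-1) := by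
    have hlt : (B (K-1)).length - 1 < (B (K-1)).length := by have := hB (K-1); omega
    have hacc := vW_access B α hB (K-1) ((B (K-1)).length - 1) hlt
    have he : cumFrom B 0 (K-1) + ((B (K-1)).length - 1) = k := by
      have h5 : cumFrom B 0 (K-1) + (B (K-1)).length = k + 1 := by
        rw [← hcum]; exact hK.symm
      have := hB (K-1); omega
    rw [he] at hacc
    rw [hacc]
    have := blsp_getD_last f α hα hstep (w (K-1))
    rwa [List.getD_eq_getElem _ _ (Nat.sub_lt (Nat.pos_of_ne_zero (hB (K-1))) Nat.one_pos)] at this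
  refine ⟨K % 3, by omega, ?_, ?_⟩
  · rw [hpred, hwdef]
    exact wabc_congr a b c (by omega)
  · intro i h
    have h1 : vAux B α 0 (k + 1 + i) = vAux B α 0 (cumFrom B 0 K + i) := by rw [hK]
    have h2 : vAux B α 0 (cumFrom B 0 K + i) = vAux B α K i := by
      have := vAux_shift B α hB K 0 i
      simpa using this
    have h3 : vAux B α K i = vAux B α (K % 3) i := by
      refine vAux_congr i K (K % 3) fun j => ?_
      show f (w (K + j)) = f (w (K % 3 + j))
      rw [hwdef]
      rw [wabc_congr a b c (show (K + j) % 3 = (K % 3 + j) % 3 by omega)]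
    have h4 : vAux B α (K % 3) i = vAux B α 0 (cumFrom B 0 (K % 3) + i) := by
      have := vAux_shift B α hB (K % 3) 0 i
      simpa using this.symm
    rw [hocc i h, h1, h2, h3, h4]

include hα hstep in
theorem common_prefix_rot (hbc : b ≠ c)
    (hq : (lcp (f b) (f c)).length ≤ (lcp (f a) (f b)).length) (u : List A)
    (h1 : ∀ i (h : i < u.length),
      u[i] = vAux (fun m => f (wabc a b c m)) α 0
        (cumFrom (fun m => f (wabc a b c m)) 0 1 + i))
    (h2 : ∀ i (h : i < u.length),
      u[i] = vAux (fun m => f (wabc a b c m)) α 0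
        (cumFrom (fun m => f (wabc a b c m)) 0 2 + i)) :
    ∀ i (h : i < u.length), u[i] = vAux (fun m => f (wabc a b c m)) α 0 i := by
  set w : ℕ → A := wabc a b c with hwdef
  set B : ℕ → List A := fun m => f (w m) with hBdef
  have hB : ∀ m, (B m).length ≠ 0 := hB_ne f α hα hstep w
  have hw0 : w 0 = a := wabc_zero a b c
  have hw1 : w 1 = b := wabc_one a b c
  have hw2 : w 2 = c := wabc_two a b c
  have hw3 : w 3 = a := by simp [hwdef, wabc]
  have hB0 : B 0 = f a := by rw [hBdef]; simp [hw0]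
  have hB1 : B 1 = f b := by rw [hBdef]; simp [hw1]
  have hB2 : B 2 = f c := by rw [hBdef]; simp [hw2]
  have hB3 : B 3 = f a := by rw [hBdef]; simp [hw3]
  set p' : List A := lcp (f b) (f c) with hp'
  set q : List A := lcp (f a) (f b) with hq'
  set L : ℕ := p'.length with hL
  have hpb : p' <+: f b := lcp_prefix_left _ _
  have hpc : p' <+: f c := lcp_prefix_right _ _
  have hqa : q <+: f a := lcp_prefix_left _ _
  have hqb : q <+: f b := lcp_prefix_right _ _
  have hLb : L ≤ (f b).length := hpb.length_le
  have hLc : L ≤ (f c).length := hpc.length_le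
  have hfbc : f b ≠ f c := by
    intro he
    apply hbc
    have h1' := blsp_getD_last f α hα hstep b
    have h2' := blsp_getD_last f α hα hstep c
    rw [he] at h1'
    exact h1'.symm.trans h2'
  have hcum2 : cumFrom B 0 2 = cumFrom B 0 1 + (B 1).length := by
    have := cumFrom_succ_right B 0 1
    simpa using this
  have hcum3 : cumFrom B 0 3 = cumFrom B 0 2 + (B 2).length := by
    have := cumFrom_succ_right B 0 2
    simpa using this
  have halpha : ∀ m, vAux B α 0 (cumFrom B 0 m) = α := by
    intro m
    have h0 : (0:ℕ) < (B m).length := Nat.pos_of_ne_zero (hB m)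
    have hacc := vW_access B α hB m 0 h0
    rw [Nat.add_zero] at hacc
    rw [hacc]
    obtain ⟨t, ht, -⟩ := blsp_head_tail f α hα hstep (w m)
    simp [hBdef, ht]
  -- first step: u.length ≤ L
  have hul : u.length ≤ L := by
    by_contra hcon
    push_neg at hcon
    have e1 := h1 L hcon
    have e2 := h2 L hcon
    by_cases hb' : L < (f b).length
    · by_cases hc' : L < (f c).length
      · -- both continue: contradiction with maximality of the lcp
        have a1 : vAux B α 0 (cumFrom B 0 1 + L) = (f b)[L] := by
          have := vW_access B α hB 1 L (by rw [hB1]; exact hb')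
          rw [this]
          simp only [hB1]
        have a2 : vAux B α 0 (cumFrom B 0 2 + L) = (f c)[L] := by
          have := vW_access B α hB 2 L (by rw [hB2]; exact hc')
          rw [this]
          simp only [hB2]
        exact lcp_get_ne (f b) (f c) hb' hc' (by rw [← a1, ← a2, ← e1, ← e2])
      · -- L = (f c).length < (f b).length
        have hLc' : L = (f c).length := by omega
        have a2 : vAux B α 0 (cumFrom B 0 2 + L) = α := by
          rw [show cumFrom B 0 2 + L = cumFrom B 0 3 by rw [hcum3, hB2]; omega]
          exact halpha 3
        have hLpos : 0 < L := by
          have := blsp_len_pos f α hα hstep c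
          omega
        have a1 : vAux B α 0 (cumFrom B 0 1 + L) ≠ α := by
          have hacc := vW_access B α hB 1 L (by rw [hB1]; exact hb')
          rw [hacc]
          have := blsp_getD_ne f α hα hstep b L hLpos hb'
          rw [List.getD_eq_getElem _ _ hb'] at this
          simpa [hB1] using this
        exact a1 (by rw [← e1, e2, a2])
    · -- L = (f b).length; then f b <+: f c strictly
      have hLb' : L = (f b).length := by omega
      have hpeq : p' = f b := hpb.eq_of_length hLb'
      have hLc2 : L < (f c).length := by
        rcases Nat.lt_or_ge L (f c).length with h | h
        · exact h
        · exfalso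
          exact hfbc (by rw [← hpeq]; exact hpc.eq_of_length (by omega))
      have a1 : vAux B α 0 (cumFrom B 0 1 + L) = α := by
        rw [show cumFrom B 0 1 + L = cumFrom B 0 2 by rw [hcum2, hB1]; omega]
        exact halpha 2
      have hLpos : 0 < L := by
        have := blsp_len_pos f α hα hstep b
        omega
      have a2 : vAux B α 0 (cumFrom B 0 2 + L) ≠ α := by
        have hacc := vW_access B α hB 2 L (by rw [hB2]; exact hLc2)
        rw [hacc]
        have := blsp_getD_ne f α hα hstep c L hLpos hLc2
        rw [List.getD_eq_getElem _ _ hLc2] at this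
        simpa [hB2] using this
      exact a2 (by rw [← e2, e1, a1])
  -- now transfer along p' ⊑ q ⊑ f a
  have hpq : p' <+: q := List.prefix_of_prefix_length_le hpb hqb hq
  have hqalen : q.length ≤ (f a).length := hqa.length_le
  intro i h
  have hiL : i < L := by omega
  have hifb : i < (f b).length := by omega
  have hifa : i < (f a).length := by omega
  have e1 := h1 i h
  have a1 : vAux B α 0 (cumFrom B 0 1 + i) = (f b)[i] := by
    have := vW_access B α hB 1 i (by rw [hB1]; exact hifb)
    rw [this]
    simp only [hB1]
  have hstepchain : (f b)[i] = (f a)[i] := by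
    have g1 : p'[i]'(by omega) = (f b)[i] := hpb.getElem (by omega)
    have g2 : p'[i]'(by omega) = q[i]'(by omega) := hpq.getElem (by omega)
    have g3 : q[i]'(by omega) = (f a)[i] := hqa.getElem (by omega)
    rw [← g1, g2, g3]
  have a0 : vAux B α 0 i = (f a)[i] := by
    have := vW_access B α hB 0 i (by rw [hB0]; exact hifa)
    rw [show cumFrom B 0 0 + i = i from by simp [cumFrom]] at this
    rw [this]
    simp only [hB0]
  rw [e1, a1, hstepchain, ← a0]

include hα hstep in
theorem v_lsp (hab : a ≠ b) (hbc : b ≠ c) (hac : a ≠ c)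
    (hq : (lcp (f b) (f c)).length ≤ (lcp (f a) (f b)).length) :
    LSPInf (vAux (fun m => f (wabc a b c m)) α 0) := by
  intro u x y hxy hx hy
  by_cases hu : u = []
  · subst hu
    intro i h
    simp at h
  set w : ℕ → A := wabc a b c with hwdef
  set B : ℕ → List A := fun m => f (w m) with hBdef
  obtain ⟨k, hk⟩ := hx
  obtain ⟨k', hk'⟩ := hy
  have hupos : 0 < u.length := List.length_pos_iff.mpr hu
  have hxv : x = vAux B α 0 k := by
    have := hk 0 (by simp)
    simpa using this
  have hyv : y = vAux B α 0 k' := by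
    have := hk' 0 (by simp)
    simpa using this
  have hocc : ∀ i (h : i < u.length), u[i] = vAux B α 0 (k + 1 + i) := by
    intro i h
    have := hk (i+1) (by simpa using Nat.succ_lt_succ h)
    rw [List.getElem_cons_succ] at this
    rw [this]
    congr 1
    omega
  have hocc' : ∀ i (h : i < u.length), u[i] = vAux B α 0 (k' + 1 + i) := by
    intro i h
    have := hk' (i+1) (by simpa using Nat.succ_lt_succ h)
    rw [List.getElem_cons_succ] at this
    rw [this]
    congr 1
    omega
  by_cases h0 : u[0]'hupos = α
  · obtain ⟨r, hr3, hpred, hrot⟩ := occ_start f α hα hstep a b c u hu h0 k hocc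
    obtain ⟨r', hr'3, hpred', hrot'⟩ := occ_start f α hα hstep a b c u hu h0 k' hocc'
    have hxw : x = wabc a b c (r+2) := hxv.trans hpred
    have hyw : y = wabc a b c (r'+2) := hyv.trans hpred'
    have hrr : r ≠ r' := by
      rintro rfl
      exact hxy (hxw.trans hyw.symm)
    have hzero : ∀ s < 3, (∀ i (h : i < u.length),
        u[i] = vAux B α 0 (cumFrom B 0 s + i)) → s = 0 → PrefI u (vAux B α 0) := by
      rintro s _ hs rfl
      intro i h
      have := hs i h
      rw [this]
      congr 1
      simp [cumFrom]
    interval_cases r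
    · exact hzero 0 (by norm_num) hrot rfl
    · interval_cases r'
      · exact hzero 0 (by norm_num) hrot' rfl
      · exact absurd rfl hrr
      · exact common_prefix_rot f α hα hstep a b c hbc hq u hrot hrot'
    · interval_cases r'
      · exact hzero 0 (by norm_num) hrot' rfl
      · exact common_prefix_rot f α hα hstep a b c hbc hq u hrot' hrot
      · exact absurd rfl hrr
  · have e1 := pred_determined f α hα hstep w u hu h0 k hocc
    have e2 := pred_determined f α hα hstep w u hu h0 k' hocc'
    exact absurd ((hxv.trans (e1.trans e2.symm)).trans hyv.symm) hxy

include hα hstep in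
/-- The concatenation of images of blocks is the word `vAux`. -/
theorem image_is_vaux (w : ℕ → A) :
    IsImage f w (vAux (fun m => f (w m)) α 0) := by
  set B : ℕ → List A := fun m => f (w m) with hBdef
  have hB : ∀ m, (B m).length ≠ 0 := hB_ne f α hα hstep w
  have hlen : ∀ n, (((List.range n).map w).flatMap f).length = cumFrom B 0 n := by
    intro n
    induction n with
    | zero => simp [cumFrom]
    | succ n ih =>
      rw [List.range_succ, List.map_append, List.flatMap_append, List.length_append, ih,
        cumFrom_succ_right]
      simp [hBdef]
  intro n
  induction n with
  | zero => intro i h; simp at h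
  | succ n ih =>
    intro i h
    simp only [List.range_succ, List.map_append, List.flatMap_append] at h ⊢
    by_cases hi : i < (((List.range n).map w).flatMap f).length
    · rw [List.getElem_append_left hi]
      exact ih i hi
    · push_neg at hi
      rw [List.getElem_append_right hi]
      simp only [List.length_append] at h
      have hlt : i - (((List.range n).map w).flatMap f).length < (B n).length := by
        have := hlen n
        simp only [List.map_cons, List.map_nil, List.flatMap_cons, List.flatMap_nil, List.append_nil] at h ⊢
        simp only [hBdef]
        omega
      have hacc := vW_access B α hB n (i - (((List.range n).map w).flatMap f).length) hlt
      rw [← hlen n] at hacc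
      rw [show (((List.range n).map w).flatMap f).length +
        (i - (((List.range n).map w).flatMap f).length) = i by omega] at hacc
      rw [hacc]
      simp [hBdef]

end MAIN

section WORD
variable {A : Type*} [DecidableEq A] (a b c : A)

theorem wabc_lsp (hab : a ≠ b) (hbc : b ≠ c) (hac : a ≠ c) : LSPInf (wabc a b c) := by
  intro u x y hxy hx hy
  by_cases hu : u = []
  · subst hu
    intro i h
    simp at h
  exfalso
  have hupos : 0 < u.length := List.length_pos_iff.mpr hu
  obtain ⟨k, hk⟩ := hx
  obtain ⟨k', hk'⟩ := hy
  have hxv : x = wabc a b c k := by exact hk 0 (by simp)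
  have hyv : y = wabc a b c k' := by exact hk' 0 (by simp)
  have h1 : u[0]'hupos = wabc a b c (k+1) := by
    have := hk 1 (by simpa using Nat.succ_lt_succ hupos)
    simpa using this
  have h2 : u[0]'hupos = wabc a b c (k'+1) := by
    have := hk' 1 (by simpa using Nat.succ_lt_succ hupos)
    simpa using this
  have key : wabc a b c k = wabc a b c k' := by
    have h3 : wabc a b c (k+1) = wabc a b c (k'+1) := by rw [← h1, h2]
    have e1 : wabc a b c (k+1) = wabc a b c ((k+1) % 3) := wabc_congr a b c (by omega)
    have e2 : wabc a b c (k'+1) = wabc a b c ((k'+1) % 3) := wabc_congr a b c (by omega)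
    have hmod : (k+1) % 3 = (k'+1) % 3 := by
      have h4 : wabc a b c ((k+1) % 3) = wabc a b c ((k'+1) % 3) := by
        rw [← e1, ← e2, h3]
      have hr : (k+1) % 3 < 3 := by omega
      have hr' : (k'+1) % 3 < 3 := by omega
      interval_cases h5 : (k+1) % 3 <;> interval_cases h6 : (k'+1) % 3 <;>
        simp_all [wabc] <;> omega
    have : k % 3 = k' % 3 := by omega
    exact wabc_congr a b c this
  exact hxy (by rw [hxv, hyv, key])

theorem wabc_fragile (hab : a ≠ b) : Fragile (wabc a b c) a b c := by
  refine ⟨a, b, hab, [], ?_, ?_, ?_⟩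
  · intro i h
    simp only [List.nil_append, List.length_cons, List.length_nil] at h
    interval_cases i <;> simp [wabc]
  · refine ⟨0, ?_⟩
    intro i h
    simp only [List.nil_append, List.length_cons, List.length_nil] at h
    interval_cases i <;> simp [wabc]
  · refine ⟨1, ?_⟩
    intro i h
    simp only [List.nil_append, List.length_cons, List.length_nil] at h
    interval_cases i <;> simp [wabc]

end WORD

section BREAK
set_option linter.unusedSectionVars false
variable {A : Type*} [DecidableEq A] (f : A → List A) (α : A)
  (hα : f α = [α]) (hstep : ∀ β, β ≠ α → ∃ γ, f β = f γ ++ [β])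

theorem flat_split (w : ℕ → A) : ∀ n k, ((List.range (k+n)).map w).flatMap f =
    ((List.range k).map w).flatMap f ++ ((List.range n).map (fun i => w (k+i))).flatMap f := by
  intro n
  induction n with
  | zero => simp
  | succ n ih =>
    intro k
    rw [show k + (n+1) = (k+n) + 1 by omega, List.range_succ, List.range_succ]
    simp only [List.map_append, List.flatMap_append, ih k, List.map_cons, List.map_nil,
      List.flatMap_cons, List.flatMap_nil, List.append_nil, List.append_assoc]

theorem factor_image (w : ℕ → A) (v : ℕ → A) (hIm : IsImage f w v) (s : List A)
    (hs : FactorI w s) :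
    ∃ m, ∀ i (h : i < (s.flatMap f).length), (s.flatMap f)[i] = v (m + i) := by
  obtain ⟨k, hk⟩ := hs
  have hseq : ((List.range s.length).map (fun i => w (k+i))) = s := by
    apply List.ext_getElem (by simp)
    intro i h1 h2
    simp only [List.getElem_map, List.getElem_range]
    exact (hk i h2).symm
  have hsplit := flat_split f w s.length k
  rw [hseq] at hsplit
  set m := (((List.range k).map w).flatMap f).length with hm
  refine ⟨m, ?_⟩
  intro i h
  have hIm' := hIm (k + s.length)
  rw [hsplit] at hIm'
  have h2 : m + i < (((List.range k).map w).flatMap f ++ s.flatMap f).length := by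
    simp only [List.length_append]
    omega
  have := hIm' (m + i) h2
  rw [List.getElem_append_right (by omega)] at this
  simp only [show m + i - (((List.range k).map w).flatMap f).length = i by omega] at this
  exact this

theorem occ_sub (v : ℕ → A) (pre mid post : List A) (m : ℕ)
    (hocc : ∀ i (h : i < (pre ++ (mid ++ post)).length), (pre ++ (mid ++ post))[i] = v (m + i)) :
    ∀ i (h : i < mid.length), mid[i] = v (m + pre.length + i) := by
  intro i h
  have h1 : pre.length + i < (pre ++ (mid ++ post)).length := by simp; omega
  have := hocc (pre.length + i) h1
  rw [List.getElem_append_right (by omega)] at this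
  simp only [show pre.length + i - pre.length = i by omega] at this
  rw [List.getElem_append_left h] at this
  rw [this]
  congr 1
  omega

include hα hstep in
theorem breaking_dir (a b c : A) (hab : a ≠ b) (hbc : b ≠ c) (hac : a ≠ c)
    (hlt : (lcp (f a) (f b)).length < (lcp (f b) (f c)).length) :
    Breaking f a b c := by
  intro w hw hfrag v hIm hv
  obtain ⟨β, γ, hβγ, u, hpre, hfb, hfc⟩ := hfrag
  set p' : List A := lcp (f b) (f c) with hp'
  set q : List A := lcp (f a) (f b) with hq'
  set L : ℕ := p'.length with hL
  have hpb : p' <+: f b := lcp_prefix_left _ _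
  have hpc : p' <+: f c := lcp_prefix_right _ _
  have hqa : q <+: f a := lcp_prefix_left _ _
  have hqb : q <+: f b := lcp_prefix_right _ _
  set uF : List A := u.flatMap f with huF
  -- the word `β (uF p')` is a factor of v
  have hfact : ∀ (δ e : A), p' <+: f e → FactorI w (δ :: (u ++ [e])) →
      FactorI v (δ :: (uF ++ p')) := by
    intro δ e hpe hocc
    obtain ⟨m, hm⟩ := factor_image f w v hIm _ hocc
    obtain ⟨s₀, hs₀⟩ := blsp_snoc f α hα hstep δ
    obtain ⟨pe', hpe'⟩ := hpe
    have hdecomp : ((δ :: (u ++ [e])).flatMap f) = s₀ ++ ((δ :: (uF ++ p')) ++ pe') := by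
      simp only [List.flatMap_cons, List.flatMap_append, List.flatMap_nil, List.append_nil,
        hs₀, ← hpe', huF]
      simp [List.append_assoc]
    rw [hdecomp] at hm
    refine ⟨m + s₀.length, ?_⟩
    exact occ_sub v s₀ _ pe' m hm
  have hf1 : FactorI v (β :: (uF ++ p')) := hfact β b hpb hfb
  have hf2 : FactorI v (γ :: (uF ++ p')) := hfact γ c hpc hfc
  -- so uF ++ p' is a prefix of v
  have hpref : PrefI (uF ++ p') v := hv _ _ _ hβγ hf1 hf2
  have hpv : ∀ i (h : i < L), p'[i] = v (uF.length + i) := by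
    intro i h
    have h1 : uF.length + i < (uF ++ p').length := by simp; omega
    have := hpref (uF.length + i) h1
    rw [List.getElem_append_right (by omega)] at this
    simp only [show uF.length + i - uF.length = i by omega] at this
    exact this
  -- and uF ++ (f a) ++ (f (w u.length + 1)) is a prefix of v
  have hwu : ∀ i (hiu : i < u.length), w i = u[i]'hiu := by
    intro i h
    have h1 : i < (u ++ [a]).length := by simp; omega
    have := hpre i h1
    rw [List.getElem_append_left h] at this
    exact this.symm
  have hwa : w u.length = a := by
    have h1 : u.length < (u ++ [a]).length := by simp
    have := hpre u.length h1
    rw [List.getElem_append_right (by omega)] at this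
    simpa using this.symm
  set d : A := w (u.length + 1) with hd
  have hseq2 : ((List.range u.length).map w) = u := by
    apply List.ext_getElem (by simp)
    intro i h1 h2
    simp only [List.getElem_map, List.getElem_range]
    exact (hwu i h2)
  have hprefax : PrefI (uF ++ (f a ++ (f d ++ []))) v := by
    have hIm' := hIm (u.length + 2)
    have hsplit := flat_split f w 2 u.length
    rw [hseq2] at hsplit
    rw [hsplit] at hIm'
    have h2 : ((List.range 2).map (fun i => w (u.length + i))).flatMap f
        = f a ++ (f d ++ []) := by
      have : (List.range 2).map (fun i => w (u.length + i)) = [a, d] := by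
        simp [List.range_succ, hwa, hd]
      rw [this]
      simp
    rw [h2] at hIm'
    exact hIm'
  have hva : ∀ i (h : i < (f a).length), (f a)[i] = v (uF.length + i) := by
    intro i h
    have h1 : uF.length + i < (uF ++ (f a ++ (f d ++ []))).length := by simp; omega
    have := hprefax (uF.length + i) h1
    rw [List.getElem_append_right (by omega)] at this
    simp only [show uF.length + i - uF.length = i by omega] at this
    rw [List.getElem_append_left h] at this
    exact this
  have hfalen : 0 < (f a).length := blsp_len_pos f α hα hstep a
  have hvα : v (uF.length + (f a).length) = α := by
    have h1 : uF.length + (f a).length < (uF ++ (f a ++ (f d ++ []))).length := by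
      have := blsp_len_pos f α hα hstep d
      simp
      omega
    have := hprefax (uF.length + (f a).length) h1
    rw [List.getElem_append_right (by omega)] at this
    simp only [show uF.length + (f a).length - uF.length = (f a).length by omega] at this
    rw [List.getElem_append_right (by omega)] at this
    simp only [show (f a).length - (f a).length = 0 by omega] at this
    rw [← this]
    obtain ⟨t, ht, -⟩ := blsp_head_tail f α hα hstep d
    simp [ht]
  by_cases hLa : L ≤ (f a).length
  · -- p' would be a common prefix of f a and f b longer than lcp (f a) (f b)
    have hpfa : p' <+: f a := by
      have he : p' = (f a).take L := by
        apply List.ext_getElem (by simp; omega)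
        intro i h1 h2
        rw [List.getElem_take]
        rw [hpv i h1, hva i (by omega)]
      rw [he]
      exact List.take_prefix _ _
    have := (prefix_lcp hpfa hpb).length_le
    rw [← hq'] at this
    omega
  · push_neg at hLa
    have hfab : (f a).length < (f b).length := by
      have := hpb.length_le
      omega
    have h1 := hpv (f a).length hLa
    rw [hvα] at h1
    have h2 : p'[(f a).length]'hLa = (f b)[(f a).length]'hfab := hpb.getElem hLa
    have h3 := blsp_getD_ne f α hα hstep b (f a).length hfalen hfab
    rw [List.getD_eq_getElem _ _ hfab] at h3
    exact h3 (by rw [← h2, h1])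

end BREAK


theorem breaking_characterization {A : Type*} [DecidableEq A] (f : A → List A)
    (hf : IsBLSP f) (a b c : A) (hab : a ≠ b) (hbc : b ≠ c) (hac : a ≠ c) :
    Breaking f a b c ↔ (lcp (f a) (f b)).length < (lcp (f b) (f c)).length := by
  obtain ⟨α, hα, hstep⟩ := hf
  constructor
  · intro hbreak
    by_contra hcon
    push_neg at hcon
    exact hbreak (wabc a b c) (wabc_lsp a b c hab hbc hac) (wabc_fragile a b c hab)
      (vAux (fun m => f (wabc a b c m)) α 0)
      (image_is_vaux f α hα hstep (wabc a b c))
      (v_lsp f α hα hstep a b c hab hbc hac hcon)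
  · intro hlt
    exact breaking_dir f α hα hstep a b c hab hbc hac hlt
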